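/- Let 1 ≤ p ≤ q < n, and let a ∈ M_n(F) be a matrix not contained in the block lower-triangular subalgebra L_{q,n−q} = {[[*,0],[*,*]]} (blocks of sizes q and n−q). Identify M_{p×q}(F) with the non-unital subalgebra of M_n(F) of matrices supported in the upper-left p×q block. Then there exists x ∈ GL_n(F) such that x⟨M_{p×q} ∪ {a}⟩x^{-1} ⊇ M_{p×(q+1)} and x M_{p×q} x^{-1} = M_{p×q}. -/

import Mathlib

open Matrix

/-- The non-unital subalgebra of `n × n` matrices supported in the upper-left
`p × q` block, viewed as a set. -/
def blockSet (F : Type*) [Field F] (n p q : ℕ) : Set (Matrix (Fin n) (Fin n) F) :=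
  {m | ∀ i j : Fin n, (p ≤ i.val ∨ q ≤ j.val) → m i j = 0}

/-- `L_{q,n-q}`: block lower-triangular matrices (top-right `q × (n-q)` block zero). -/
def lowerBlockSet (F : Type*) [Field F] (n q : ℕ) : Set (Matrix (Fin n) (Fin n) F) :=
  {m | ∀ i j : Fin n, i.val < q → q ≤ j.val → m i j = 0}

theorem stmt_6 (F : Type*) [Field F] (n p q : ℕ)
    (hp : 1 ≤ p) (hpq : p ≤ q) (hq : q < n)
    (a : Matrix (Fin n) (Fin n) F) (ha : a ∉ lowerBlockSet F n q) :
    ∃ x : GL (Fin n) F,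
      blockSet F n p (q + 1) ⊆
        (fun b => (x : Matrix (Fin n) (Fin n) F) * b * ((x⁻¹ : GL (Fin n) F) : Matrix (Fin n) (Fin n) F)) ''
          (NonUnitalAlgebra.adjoin F (blockSet F n p q ∪ {a}) : Set (Matrix (Fin n) (Fin n) F)) ∧
      (fun b => (x : Matrix (Fin n) (Fin n) F) * b * ((x⁻¹ : GL (Fin n) F) : Matrix (Fin n) (Fin n) F)) ''
          blockSet F n p q = blockSet F n p q := by
  classical
  simp only [lowerBlockSet, Set.mem_setOf_eq] at ha
  push_neg at ha
  obtain ⟨i, j, hij, hjq, hc⟩ := ha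
  set qF : Fin n := ⟨q, hq⟩ with hqFdef
  have hqFval : (qF : ℕ) = q := rfl
  set c : F := a i j with hcdef
  set σ : Equiv.Perm (Fin n) := Equiv.swap qF j with hσdef
  have hσqF : σ qF = j := Equiv.swap_apply_left _ _
  have hσj : σ j = qF := Equiv.swap_apply_right _ _
  have hσσ : ∀ t, σ (σ t) = t := fun t => Equiv.swap_apply_self _ _ t
  have hσlow : ∀ t : Fin n, (t : ℕ) < q → σ t = t := by
    intro t ht
    refine Equiv.swap_apply_of_ne_of_ne ?_ ?_
    · rintro rfl; omega
    · rintro rfl; omega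
  have hσhigh : ∀ t : Fin n, q ≤ (t : ℕ) → q ≤ ((σ t) : ℕ) := by
    intro t ht
    rcases eq_or_ne t qF with rfl | h1
    · rw [hσqF]; exact hjq
    rcases eq_or_ne t j with rfl | h2
    · rw [hσj]
    · rw [hσdef, Equiv.swap_apply_of_ne_of_ne h1 h2]; exact ht
  have hrowP : ∀ t : Fin n, p ≤ (t : ℕ) → p ≤ ((σ t) : ℕ) := by
    intro t ht
    rcases eq_or_ne t qF with rfl | h1
    · rw [hσqF]; omega
    rcases eq_or_ne t j with rfl | h2
    · rw [hσj]; omega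
    · rw [hσdef, Equiv.swap_apply_of_ne_of_ne h1 h2]; exact ht
  set r' : Fin n → F := fun l => if q ≤ (l : ℕ) then a i l else 0 with hr'def
  have hr'j : r' j = c := by simp [hr'def, hjq, hcdef]
  have hr'low : ∀ l : Fin n, (l : ℕ) < q → r' l = 0 := by
    intro l hl; simp [hr'def, not_le.mpr hl]
  set u : Fin n → F := fun k => (if k = qF then (1 : F) else 0) - c⁻¹ * r' (σ k) with hudef
  have huqF : u qF = 0 := by
    simp [hudef, hσqF, hr'j, inv_mul_cancel₀ hc]
  have hulow : ∀ l : Fin n, (l : ℕ) < q → u l = 0 := by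
    intro l hl
    have h1 : l ≠ qF := by intro h; rw [h] at hl; omega
    simp [hudef, h1, hσlow l hl, hr'low l hl]
  set P : Matrix (Fin n) (Fin n) F := Matrix.of (fun k l => if σ k = l then (1 : F) else 0) with hPdef
  set N : Matrix (Fin n) (Fin n) F := Matrix.of (fun k l => if k = qF then u l else 0) with hNdef
  have hPm : ∀ m : Matrix (Fin n) (Fin n) F, ∀ k l, (P * m) k l = m (σ k) l := by
    intro m k l
    rw [Matrix.mul_apply]
    simp [hPdef, ite_mul, Finset.sum_ite_eq]
  have hmP : ∀ m : Matrix (Fin n) (Fin n) F, ∀ k l, (m * P) k l = m k (σ l) := by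
    intro m k l
    rw [Matrix.mul_apply]
    have h : ∀ t : Fin n, (if σ t = l then (1 : F) else 0) = (if t = σ l then (1 : F) else 0) := by
      intro t
      congr 1
      simp only [eq_iff_iff]
      constructor
      · rintro rfl; rw [hσσ]
      · rintro rfl; rw [hσσ]
    simp only [hPdef, Matrix.of_apply, h]
    simp [mul_ite, Finset.sum_ite_eq']
  have hmN : ∀ m : Matrix (Fin n) (Fin n) F, ∀ k l, (m * N) k l = m k qF * u l := by
    intro m k l
    rw [Matrix.mul_apply]
    simp [hNdef, mul_ite, Finset.sum_ite_eq']
  have hPP : P * P = 1 := by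
    ext k l
    rw [hPm]
    simp [hPdef, hσσ, Matrix.one_apply]
  have hNN : N * N = 0 := by
    ext k l
    rw [hmN]
    simp [hNdef, huqF]
  have hfact1 : (1 - N) * (1 + N) = 1 := by
    have h : (1 - N) * (1 + N) = 1 - N * N := by noncomm_ring
    rw [h, hNN, sub_zero]
  have hfact2 : (1 + N) * (1 - N) = 1 := by
    have h : (1 + N) * (1 - N) = 1 - N * N := by noncomm_ring
    rw [h, hNN, sub_zero]
  set X : Matrix (Fin n) (Fin n) F := (1 - N) * P with hXdef
  set Xv : Matrix (Fin n) (Fin n) F := P * (1 + N) with hXvdef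
  have hXXv : X * Xv = 1 := by
    rw [hXdef, hXvdef, mul_assoc, ← mul_assoc P P, hPP, one_mul, hfact1]
  have hXvX : Xv * X = 1 := by
    rw [hXvdef, hXdef, mul_assoc, ← mul_assoc (1 + N) (1 - N) P, hfact2, one_mul, hPP]
  -- the conjugation formula on row-supported matrices
  have hconj : ∀ m : Matrix (Fin n) (Fin n) F,
      (∀ k l : Fin n, p ≤ (k : ℕ) → m k l = 0) →
      ∀ k l, (X * m * Xv) k l = m k (σ l) + m k j * u l := by
    intro m hrs k l
    have hPmEq : P * m = m := by
      ext k' l'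
      rw [hPm]
      by_cases hk : (k' : ℕ) < p
      · rw [hσlow k' (lt_of_lt_of_le hk hpq)]
      · rw [hrs _ _ (hrowP k' (not_lt.1 hk)), hrs k' l' (not_lt.1 hk)]
    have hNmEq : N * m = 0 := by
      ext k' l'
      rw [Matrix.mul_apply]
      simp only [hNdef, Matrix.of_apply, Matrix.zero_apply]
      rcases eq_or_ne k' qF with rfl | hk
      · simp only [if_pos rfl]
        apply Finset.sum_eq_zero
        intro t _
        by_cases ht : (t : ℕ) < p
        · simp [hulow t (lt_of_lt_of_le ht hpq)]
        · simp [hrs t l' (not_lt.1 ht)]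
      · simp [hk]
    have hXm : X * m = m := by
      rw [hXdef, mul_assoc, hPmEq, sub_mul, one_mul, hNmEq, sub_zero]
    rw [hXm, hXvdef, ← mul_assoc, mul_add, mul_one, Matrix.add_apply, hmN, hmP, hmP, hσqF]
  -- conjugation is the identity on blockSet p q
  have hid : ∀ m ∈ blockSet F n p q, X * m * Xv = m := by
    intro m hm
    have hm' : ∀ k l : Fin n, p ≤ (k : ℕ) ∨ q ≤ (l : ℕ) → m k l = 0 := hm
    ext k l
    rw [hconj m (fun k l hk => hm' k l (Or.inl hk))]
    rw [hm' k j (Or.inr hjq), zero_mul, add_zero]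
    by_cases hl : (l : ℕ) < q
    · rw [hσlow l hl]
    · rw [hm' k (σ l) (Or.inr (hσhigh l (not_lt.1 hl))), hm' k l (Or.inr (not_lt.1 hl))]
  refine ⟨⟨X, Xv, hXXv, hXvX⟩, ?_, ?_⟩
  · -- main inclusion
    intro m hm
    have hm' : ∀ k l : Fin n, p ≤ (k : ℕ) ∨ q + 1 ≤ (l : ℕ) → m k l = 0 := hm
    set v : Fin n → F := fun k => m k qF with hvdef
    have hv : ∀ k : Fin n, p ≤ (k : ℕ) → v k = 0 := fun k hk => hm' k qF (Or.inl hk)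
    set m₁ : Matrix (Fin n) (Fin n) F := Matrix.of (fun k l => if l = qF then 0 else m k l) with hm₁def
    set C : Matrix (Fin n) (Fin n) F := Matrix.of (fun k l => if l = i then v k else 0) with hCdef
    set D : Matrix (Fin n) (Fin n) F :=
      Matrix.of (fun k l => if (l : ℕ) < q then v k * a i l else 0) with hDdef
    set b : Matrix (Fin n) (Fin n) F := m₁ + c⁻¹ • (C * a - D) with hbdef
    have hm₁mem : m₁ ∈ blockSet F n p q := by
      simp only [blockSet, Set.mem_setOf_eq]
      intro k l hkl
      simp only [hm₁def, Matrix.of_apply]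
      rcases eq_or_ne l qF with rfl | hl
      · rw [if_pos rfl]
      · rw [if_neg hl]
        rcases hkl with hk | hlq
        · exact hm' k l (Or.inl hk)
        · refine hm' k l (Or.inr ?_)
          have hne : (l : ℕ) ≠ q := fun h => hl (Fin.ext (by omega))
          omega
    have hCmem : C ∈ blockSet F n p q := by
      simp only [blockSet, Set.mem_setOf_eq]
      intro k l hkl
      simp only [hCdef, Matrix.of_apply]
      rcases eq_or_ne l i with rfl | hl
      · rw [if_pos rfl]
        rcases hkl with hk | hlq
        · exact hv k hk
        · omega
      · rw [if_neg hl]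
    have hDmem : D ∈ blockSet F n p q := by
      simp only [blockSet, Set.mem_setOf_eq]
      intro k l hkl
      simp only [hDdef, Matrix.of_apply]
      rcases hkl with hk | hlq
      · rw [hv k hk]; simp
      · rw [if_neg (by omega)]
    have hsub : ∀ z, z ∈ blockSet F n p q →
        z ∈ NonUnitalAlgebra.adjoin F (blockSet F n p q ∪ {a}) :=
      fun z hz => NonUnitalAlgebra.subset_adjoin F (Set.mem_union_left _ hz)
    have hamem : a ∈ NonUnitalAlgebra.adjoin F (blockSet F n p q ∪ {a}) :=
      NonUnitalAlgebra.subset_adjoin F (Set.mem_union_right _ rfl)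
    have hbmem : b ∈ NonUnitalAlgebra.adjoin F (blockSet F n p q ∪ {a}) := by
      rw [hbdef]
      exact add_mem (hsub _ hm₁mem)
        (SMulMemClass.smul_mem _ (sub_mem (mul_mem (hsub _ hCmem) hamem) (hsub _ hDmem)))
    have hCa : ∀ k l, (C * a) k l = v k * a i l := by
      intro k l
      rw [Matrix.mul_apply]
      simp [hCdef, ite_mul, Finset.sum_ite_eq']
    have hbentry : ∀ k l, b k l = (if l = qF then 0 else m k l) + c⁻¹ * (v k * r' l) := by
      intro k l
      rw [hbdef]
      simp only [Matrix.add_apply, Matrix.smul_apply, Matrix.sub_apply, smul_eq_mul, hCa,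
        hm₁def, Matrix.of_apply, hDdef, hr'def]
      congr 1
      by_cases hl : q ≤ (l : ℕ)
      · rw [if_pos hl, if_neg (by omega : ¬ (l : ℕ) < q), sub_zero]
      · rw [if_neg hl, if_pos (by omega : (l : ℕ) < q), sub_self, mul_zero, mul_zero, mul_zero]
    have hbrow : ∀ k l : Fin n, p ≤ (k : ℕ) → b k l = 0 := by
      intro k l hk
      rw [hbentry k l, hv k hk, zero_mul, mul_zero, add_zero]
      split_ifs with h
      · rfl
      · exact hm' k l (Or.inl hk)
    have hbj : ∀ k, b k j = v k := by
      intro k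
      rw [hbentry, hr'j]
      have h1 : (if j = qF then (0 : F) else m k j) = 0 := by
        split_ifs with h
        · rfl
        · refine hm' k j (Or.inr ?_)
          have hne : (j : ℕ) ≠ q := fun hh => h (Fin.ext (by omega))
          omega
      rw [h1, zero_add, mul_comm (v k) c, ← mul_assoc, inv_mul_cancel₀ hc, one_mul]
    refine ⟨b, hbmem, ?_⟩
    show X * b * Xv = m
    ext k l
    rw [hconj b hbrow k l]
    by_cases hl : (l : ℕ) < q
    · have hlqF : l ≠ qF := by intro h; rw [h] at hl; omega
      rw [hσlow l hl, hbentry, hulow l hl, mul_zero, add_zero, hr'low l hl, mul_zero,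
        mul_zero, add_zero, if_neg hlqF]
    · have hl' : q ≤ (l : ℕ) := not_lt.1 hl
      rw [hbj k, hbentry]
      have h1 : (if σ l = qF then (0 : F) else m k (σ l)) = 0 := by
        split_ifs with h
        · rfl
        · refine hm' k (σ l) (Or.inr ?_)
          have h2 : q ≤ ((σ l) : ℕ) := hσhigh l hl'
          have h3 : ((σ l) : ℕ) ≠ q := fun hh => h (Fin.ext (by omega))
          omega
      rw [h1, zero_add]
      simp only [hudef]
      have h4 : m k l = v k * (if l = qF then 1 else 0) := by
        rcases eq_or_ne l qF with rfl | h
        · simp [hvdef]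
        · rw [if_neg h, mul_zero]
          refine hm' k l (Or.inr ?_)
          have hne : (l : ℕ) ≠ q := fun hh => h (Fin.ext (by omega))
          omega
      rw [h4]
      ring
  · -- conjugation fixes blockSet p q
    apply Set.Subset.antisymm
    · rintro m' ⟨m, hm, rfl⟩
      show X * m * Xv ∈ blockSet F n p q
      rw [hid m hm]
      exact hm
    · intro m hm
      exact ⟨m, hm, hid m hm⟩
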